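/- If Q* is the fixed point of the MCRE operator Z^π, then the induced value function V*(s) := Q*(s,π(s)) satisfies the true Bellman equation V*(s) = r(s,π(s)) + γ𝔼_{s'∼P(·|s,π(s))}[V*(s')], provided υγ < 1 and I^π(s,π(s)) = 0 for all s; consequently V* equals the true value function V^π. -/
import Mathlib


/-- The true Bellman operator. -/
def TBell {S A : Type*} [Fintype S] (P : S → A → S → ℝ) (r : S → A → ℝ) (γ : ℝ)
    (π : S → A) (Q : S → A → ℝ) : S → A → ℝ :=
  fun s a => r s a + γ * ∑ s', P s a s' * Q s' (π s')

/-- The true TD Bellman operator: `H^π Q = T^π Q - γ(T^π Q - Q(·,π(·)))`. -/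
def Hop {S A : Type*} [Fintype S] (P : S → A → S → ℝ) (r : S → A → ℝ) (γ : ℝ)
    (π : S → A) (Q : S → A → ℝ) : S → A → ℝ :=
  fun s a => TBell P r γ π Q s a - γ * (TBell P r γ π Q s a - Q s (π s))

/-- The MCRE operator. -/
def Zop {S A : Type*} [Fintype S] (P : S → A → S → ℝ) (r : S → A → ℝ) (γ υ : ℝ)
    (I : S → A → ℝ) (π : S → A) (Q : S → A → ℝ) : S → A → ℝ :=
  fun s a => (1 - υ) * TBell P r γ π Q s a + υ * Hop P r γ π Q s a - γ * I s a

/-- The value function induced by the MCRE fixed point satisfies the true Bellman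
equation, and hence equals the true value function. -/
theorem mcre_fixedPoint_value_exact
    {S A : Type*} [Fintype S] [Fintype A] [Nonempty S] [Nonempty A]
    (P : S → A → S → ℝ) (hP0 : ∀ s a s', 0 ≤ P s a s')
    (hP1 : ∀ s a, ∑ s', P s a s' = 1)
    (r : S → A → ℝ) (γ υ : ℝ) (hγ0 : 0 ≤ γ) (hγ1 : γ < 1)
    (hυ0 : 0 ≤ υ) (hυ1 : υ ≤ 1) (hυγ : υ * γ < 1)
    (I : S → A → ℝ) (π : S → A) (hIπ : ∀ s, I s (π s) = 0)
    (Qstar : S → A → ℝ) (hQstar : Zop P r γ υ I π Qstar = Qstar) :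
    (∀ s, Qstar s (π s) =
        r s (π s) + γ * ∑ s', P s (π s) s' * Qstar s' (π s')) ∧
    ∀ V : S → ℝ, (∀ s, V s = r s (π s) + γ * ∑ s', P s (π s) s' * V s') →
      (fun s => Qstar s (π s)) = V := by
  have hbell : ∀ s, Qstar s (π s) =
      r s (π s) + γ * ∑ s', P s (π s) s' * Qstar s' (π s') := by
    intro s
    have h := congrFun (congrFun hQstar s) (π s)
    simp only [Zop, Hop, hIπ s] at h
    -- h : (1-υ)*T + υ*(T - γ*(T - Q)) - γ*0 = Q
    have h2 : (1 - υ * γ) * TBell P r γ π Qstar s (π s)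
        = (1 - υ * γ) * Qstar s (π s) := by ring_nf; ring_nf at h; linarith
    have := mul_left_cancel₀ (by linarith : (1 - υ * γ) ≠ 0) h2
    simpa [TBell] using this.symm
  refine ⟨hbell, ?_⟩
  intro V hV
  set W : S → ℝ := fun s => Qstar s (π s) - V s with hW
  have hWrec : ∀ s, W s = γ * ∑ s', P s (π s) s' * W s' := by
    intro s
    have h1 := hbell s
    have h2 := hV s
    simp only [hW]
    rw [h1, h2]
    rw [show (∑ s', P s (π s) s' * (Qstar s' (π s') - V s'))
        = (∑ s', P s (π s) s' * Qstar s' (π s')) - ∑ s', P s (π s) s' * V s' by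
      rw [← Finset.sum_sub_distrib]; congr 1; ext s'; ring]
    ring
  obtain ⟨s0, hs0⟩ := Finite.exists_max (fun s => |W s|)
  have hbd : |W s0| ≤ γ * |W s0| := by
    calc |W s0| = γ * |∑ s', P s0 (π s0) s' * W s'| := by
          rw [hWrec s0, abs_mul, abs_of_nonneg hγ0]
      _ ≤ γ * ∑ s', |P s0 (π s0) s' * W s'| :=
          mul_le_mul_of_nonneg_left (Finset.abs_sum_le_sum_abs _ _) hγ0
      _ ≤ γ * ∑ s', P s0 (π s0) s' * |W s0| := by
          apply mul_le_mul_of_nonneg_left _ hγ0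
          apply Finset.sum_le_sum
          intro s' _
          rw [abs_mul, abs_of_nonneg (hP0 _ _ _)]
          exact mul_le_mul_of_nonneg_left (hs0 s') (hP0 _ _ _)
      _ = γ * |W s0| := by rw [← Finset.sum_mul, hP1]; ring
  have hz : |W s0| = 0 := by nlinarith [abs_nonneg (W s0)]
  funext s
  have : |W s| = 0 := le_antisymm (hz ▸ hs0 s) (abs_nonneg _)
  have := abs_eq_zero.mp this
  simp only [hW] at this
  linarith
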